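/- Sup-norm growth bound and resolvent estimate: set M_b := (|α|/Re α)^{d/2} and ω_b := −Re δ. Then for every bounded continuous v : ℝ^d → ℂ and every t ≥ 0, sup_{x∈ℝ^d} |[T(t)v](x)| ≤ M_b e^{ω_b t} sup_{x∈ℝ^d} |v(x)|; and for every λ ∈ ℂ with Re λ > ω_b and every bounded continuous g : ℝ^d → ℂ, the function v⋆(x) := ∫_0^∞ e^{−λt} [T(t)g](x) dt is defined for every x ∈ ℝ^d and satisfies sup_{x∈ℝ^d} |v⋆(x)| ≤ (M_b/(Re λ − ω_b)) · sup_{x∈ℝ^d} |g(x)|. -/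

import Mathlib

open MeasureTheory

/-- Rotation `e^{tS}x` given by the matrix exponential. -/
noncomputable def ouRot (d : ℕ) (S : Matrix (Fin d) (Fin d) ℝ) (t : ℝ)
    (x : EuclideanSpace ℝ (Fin d)) : EuclideanSpace ℝ (Fin d) :=
  WithLp.toLp 2 (Matrix.mulVec (NormedSpace.exp (t • S)) x)

/-- The scalar complex Ornstein--Uhlenbeck kernel. -/
noncomputable def ouH (d : ℕ) (α δ : ℂ) (S : Matrix (Fin d) (Fin d) ℝ)
    (x ξ : EuclideanSpace ℝ (Fin d)) (t : ℝ) : ℂ :=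
  (4 * (Real.pi : ℂ) * α * t) ^ (-(d : ℂ) / 2) *
    Complex.exp (-(δ * t) - ((‖ouRot d S t x - ξ‖ ^ 2 : ℝ) : ℂ) / (4 * α * t))

/-- The Ornstein--Uhlenbeck semigroup `[T(t)v](x) = ∫ H(x,ξ,t) v(ξ) dξ` for `t > 0`,
and `T(0)v = v`. -/
noncomputable def ouT (d : ℕ) (α δ : ℂ) (S : Matrix (Fin d) (Fin d) ℝ) (t : ℝ)
    (v : EuclideanSpace ℝ (Fin d) → ℂ) (x : EuclideanSpace ℝ (Fin d)) : ℂ :=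
  if t = 0 then v x else ∫ ξ : EuclideanSpace ℝ (Fin d), ouH d α δ S x ξ t * v ξ

section Aux

open Real Set

/-- Modulus of the OU kernel. -/
lemma ouH_abs (d : ℕ) (α δ : ℂ) (hα : 0 < α.re) (S : Matrix (Fin d) (Fin d) ℝ)
    (x ξ : EuclideanSpace ℝ (Fin d)) {t : ℝ} (ht : 0 < t) :
    ‖ouH d α δ S x ξ t‖ =
      (4 * Real.pi * ‖α‖ * t) ^ (-(d:ℝ)/2) * Real.exp (-δ.re * t) *
        Real.exp (-(α.re / (4 * ‖α‖ ^ 2 * t)) * ‖ouRot d S t x - ξ‖ ^ 2) := by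
  have hαne : α ≠ 0 := fun h => by simp [h] at hα
  have habs : 0 < ‖α‖ := norm_pos_iff.mpr hαne
  have hz : (4 * (Real.pi : ℂ) * α * t) ≠ 0 := by
    apply mul_ne_zero; apply mul_ne_zero; apply mul_ne_zero
    · norm_num
    · exact_mod_cast Real.pi_ne_zero
    · exact hαne
    · exact_mod_cast ht.ne'
  have habsz : ‖4 * (Real.pi : ℂ) * α * t‖ = 4 * Real.pi * ‖α‖ * t := by
    simp [norm_mul, Complex.norm_real, abs_of_pos Real.pi_pos, abs_of_pos ht]
  rw [ouH, norm_mul, Complex.norm_cpow_of_ne_zero hz, Complex.norm_exp]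
  have h1 : (-(d:ℂ)/2) = ((-(d:ℝ)/2 : ℝ) : ℂ) := by push_cast; ring
  rw [h1, habsz]
  simp only [Complex.ofReal_re, Complex.ofReal_im, mul_zero, Real.exp_zero, div_one]
  have h2 : (δ * (t:ℂ)).re = δ.re * t := by
    simp [Complex.mul_re]
  have h3 : ((((‖ouRot d S t x - ξ‖ ^ 2 : ℝ)) : ℂ) / (4 * α * t)).re
      = ‖ouRot d S t x - ξ‖ ^ 2 * (α.re / (4 * ‖α‖ ^ 2 * t)) := by
    rw [div_eq_mul_inv, Complex.re_ofReal_mul, Complex.inv_re]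
    congr 1
    rw [Complex.normSq_eq_norm_sq]
    have h4 : ‖4 * α * (t:ℂ)‖ = 4 * ‖α‖ * t := by
      simp [norm_mul, Complex.norm_real, abs_of_pos ht]
    have h5 : (4 * α * (t:ℂ)).re = 4 * α.re * t := by
      simp [Complex.mul_re, Complex.mul_im]
    rw [h4, h5]
    field_simp
  have hre : (-(δ * (t:ℂ)) - (((‖ouRot d S t x - ξ‖ ^ 2 : ℝ)) : ℂ) / (4 * α * t)).re
      = -δ.re * t + (-(α.re / (4 * ‖α‖ ^ 2 * t)) * ‖ouRot d S t x - ξ‖ ^ 2) := by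
    rw [Complex.sub_re, Complex.neg_re, h2, h3]; ring
  rw [hre, Real.exp_add, ← mul_assoc]

/-- Gaussian integral over Euclidean space, with center. -/
lemma gauss_int (d : ℕ) {c : ℝ} (hc : 0 < c) (m : EuclideanSpace ℝ (Fin d)) :
    Integrable (fun ξ : EuclideanSpace ℝ (Fin d) => Real.exp (-c * ‖m - ξ‖ ^ 2)) ∧
    ∫ ξ : EuclideanSpace ℝ (Fin d), Real.exp (-c * ‖m - ξ‖ ^ 2) = (π / c) ^ ((d:ℝ)/2) := by
  have hint : Integrable (fun v : EuclideanSpace ℝ (Fin d) => Real.exp (-c * ‖v‖ ^ 2)) := by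
    have h := (GaussianFourier.integrable_cexp_neg_mul_sq_norm_add
      (b := (c:ℂ)) (by simpa using hc) 0 (0 : EuclideanSpace ℝ (Fin d))).norm
    refine h.congr (Filter.Eventually.of_forall fun v => ?_)
    simp [Complex.norm_exp]
    exact Or.inl (by rw [← Complex.ofReal_pow, Complex.ofReal_re])
  constructor
  · exact (integrable_comp_sub_left _ m).mpr hint
  · rw [integral_sub_left_eq_self (fun v : EuclideanSpace ℝ (Fin d) => Real.exp (-c * ‖v‖ ^ 2)) _ m]
    have := GaussianFourier.integral_rexp_neg_mul_sq_norm (V := EuclideanSpace ℝ (Fin d)) hc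
    rw [this, finrank_euclideanSpace_fin]

/-- Integral of the modulus of the OU kernel. -/
lemma ouH_abs_integral (d : ℕ) (α δ : ℂ) (hα : 0 < α.re) (S : Matrix (Fin d) (Fin d) ℝ)
    (x : EuclideanSpace ℝ (Fin d)) {t : ℝ} (ht : 0 < t) :
    Integrable (fun ξ : EuclideanSpace ℝ (Fin d) => ‖ouH d α δ S x ξ t‖) ∧
    ∫ ξ : EuclideanSpace ℝ (Fin d), ‖ouH d α δ S x ξ t‖
      = (‖α‖ / α.re) ^ ((d:ℝ)/2) * Real.exp (-δ.re * t) := by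
  have hαne : α ≠ 0 := fun h => by simp [h] at hα
  have habs : 0 < ‖α‖ := norm_pos_iff.mpr hαne
  set c : ℝ := α.re / (4 * ‖α‖ ^ 2 * t) with hc
  have hcpos : 0 < c := by positivity
  set m := ouRot d S t x
  obtain ⟨hgint, hgval⟩ := gauss_int d hcpos m
  have key : ∀ ξ : EuclideanSpace ℝ (Fin d), ‖ouH d α δ S x ξ t‖
      = ((4 * Real.pi * ‖α‖ * t) ^ (-(d:ℝ)/2) * Real.exp (-δ.re * t)) *
        Real.exp (-c * ‖m - ξ‖ ^ 2) := by
    intro ξ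
    rw [ouH_abs d α δ hα S x ξ ht]
  have harith : (4 * Real.pi * ‖α‖ * t) ^ (-(d:ℝ)/2) * (π / c) ^ ((d:ℝ)/2)
      = (‖α‖ / α.re) ^ ((d:ℝ)/2) := by
    have h1 : (0:ℝ) < 4 * Real.pi * ‖α‖ * t := by positivity
    have h2 : (0:ℝ) < π / c := by positivity
    rw [show -(d:ℝ)/2 = -((d:ℝ)/2) by ring, Real.rpow_neg h1.le, inv_mul_eq_div,
      ← Real.div_rpow h2.le h1.le]
    congr 1
    rw [hc]
    field_simp
  constructor
  · exact (hgint.const_mul _).congr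
      (Filter.Eventually.of_forall fun ξ => (key ξ).symm)
  · calc ∫ ξ : EuclideanSpace ℝ (Fin d), ‖ouH d α δ S x ξ t‖
        = ∫ ξ : EuclideanSpace ℝ (Fin d),
            ((4 * Real.pi * ‖α‖ * t) ^ (-(d:ℝ)/2) * Real.exp (-δ.re * t)) *
              Real.exp (-c * ‖m - ξ‖ ^ 2) := by
          exact integral_congr_ae (Filter.Eventually.of_forall key)
      _ = ((4 * Real.pi * ‖α‖ * t) ^ (-(d:ℝ)/2) * Real.exp (-δ.re * t)) *
            ∫ ξ : EuclideanSpace ℝ (Fin d), Real.exp (-c * ‖m - ξ‖ ^ 2) := by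
          exact integral_const_mul _ _
      _ = (‖α‖ / α.re) ^ ((d:ℝ)/2) * Real.exp (-δ.re * t) := by
          rw [hgval]
          rw [show (4 * Real.pi * ‖α‖ * t) ^ (-(d:ℝ)/2) * Real.exp (-δ.re * t)
              * (π / c) ^ ((d:ℝ)/2)
            = ((4 * Real.pi * ‖α‖ * t) ^ (-(d:ℝ)/2) * (π / c) ^ ((d:ℝ)/2))
              * Real.exp (-δ.re * t) by ring, harith]

lemma ouH_continuous (d : ℕ) (α δ : ℂ) (S : Matrix (Fin d) (Fin d) ℝ)
    (x : EuclideanSpace ℝ (Fin d)) (t : ℝ) :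
    Continuous (fun ξ : EuclideanSpace ℝ (Fin d) => ouH d α δ S x ξ t) := by
  unfold ouH
  fun_prop

/-- Key pointwise bound on `T(t)v` for `t > 0`. -/
lemma ouT_bound (d : ℕ) (α δ : ℂ) (hα : 0 < α.re) (S : Matrix (Fin d) (Fin d) ℝ)
    (v : EuclideanSpace ℝ (Fin d) → ℂ) (hv : Continuous v) {K : ℝ}
    (hK : ∀ ξ, ‖v ξ‖ ≤ K) {t : ℝ} (ht : 0 < t)
    (x : EuclideanSpace ℝ (Fin d)) :
    ‖ouT d α δ S t v x‖
      ≤ (‖α‖ / α.re) ^ ((d:ℝ)/2) * Real.exp (-δ.re * t) * K := by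
  obtain ⟨hHint, hHval⟩ := ouH_abs_integral d α δ hα S x ht
  have hK0 : 0 ≤ K := le_trans (norm_nonneg _) (hK x)
  have hint : Integrable (fun ξ : EuclideanSpace ℝ (Fin d) => ouH d α δ S x ξ t * v ξ) := by
    refine Integrable.mono' (hHint.mul_const K)
      ((ouH_continuous d α δ S x t).mul hv).aestronglyMeasurable
      (Filter.Eventually.of_forall fun ξ => ?_)
    rw [norm_mul]
    exact mul_le_mul_of_nonneg_left (hK ξ) (norm_nonneg _)
  rw [ouT, if_neg ht.ne']
  calc ‖∫ ξ : EuclideanSpace ℝ (Fin d), ouH d α δ S x ξ t * v ξ‖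
      = ‖∫ ξ : EuclideanSpace ℝ (Fin d), ouH d α δ S x ξ t * v ξ‖ := rfl
    _ ≤ ∫ ξ : EuclideanSpace ℝ (Fin d), ‖ouH d α δ S x ξ t * v ξ‖ :=
        norm_integral_le_integral_norm _
    _ ≤ ∫ ξ : EuclideanSpace ℝ (Fin d), ‖ouH d α δ S x ξ t‖ * K := by
        refine integral_mono hint.norm (hHint.mul_const K) fun ξ => ?_
        rw [norm_mul]
        exact mul_le_mul_of_nonneg_left (hK ξ) (norm_nonneg _)
    _ = (∫ ξ : EuclideanSpace ℝ (Fin d), ‖ouH d α δ S x ξ t‖) * K :=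
        integral_mul_const _ _
    _ = (‖α‖ / α.re) ^ ((d:ℝ)/2) * Real.exp (-δ.re * t) * K := by rw [hHval]

lemma ouRot_continuous (d : ℕ) (S : Matrix (Fin d) (Fin d) ℝ)
    (x : EuclideanSpace ℝ (Fin d)) :
    Continuous (fun t : ℝ => ouRot d S t x) := by
  letI : SeminormedRing (Matrix (Fin d) (Fin d) ℝ) := Matrix.linftyOpSemiNormedRing
  letI : NormedRing (Matrix (Fin d) (Fin d) ℝ) := Matrix.linftyOpNormedRing
  letI : NormedAlgebra ℝ (Matrix (Fin d) (Fin d) ℝ) := Matrix.linftyOpNormedAlgebra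
  letI : NormedAlgebra ℚ (Matrix (Fin d) (Fin d) ℝ) := NormedAlgebra.restrictScalars ℚ ℝ _
  have h1 : Continuous fun t : ℝ => NormedSpace.exp (t • S) :=
    NormedSpace.exp_continuous.comp (continuous_id.smul continuous_const)
  have h2 : Continuous fun t : ℝ => ((NormedSpace.exp (t • S)).mulVec x : Fin d → ℝ) := by
    refine continuous_pi fun i => ?_
    simp only [Matrix.mulVec, dotProduct]
    exact continuous_finset_sum _ fun j _ =>
      (((continuous_apply j).comp ((continuous_apply i).comp h1)).mul continuous_const)
  exact (PiLp.continuous_toLp 2 _).comp h2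

end Aux

open Real Set

/-- sup-norm growth bound `‖T(t)v‖_∞ ≤ M_b e^{ω_b t}‖v‖_∞`
(with `M_b = (|α|/Re α)^{d/2}`, `ω_b = -Re δ`) and the corresponding resolvent estimate. -/
theorem ouSemigroup_sup_norm_growth_and_resolvent
    (d : ℕ) (hd : 1 ≤ d) (α δ : ℂ) (hα : 0 < α.re)
    (S : Matrix (Fin d) (Fin d) ℝ) (hS : S.transpose = -S) :
    (∀ v : EuclideanSpace ℝ (Fin d) → ℂ, Continuous v → (∃ C : ℝ, ∀ x, ‖v x‖ ≤ C) →
      ∀ t : ℝ, 0 ≤ t → ∀ x : EuclideanSpace ℝ (Fin d),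
        ‖ouT d α δ S t v x‖
          ≤ (‖α‖ / α.re) ^ ((d : ℝ) / 2) * Real.exp (-δ.re * t) *
            ⨆ y : EuclideanSpace ℝ (Fin d), ‖v y‖) ∧
    (∀ lam : ℂ, -δ.re < lam.re →
      ∀ g : EuclideanSpace ℝ (Fin d) → ℂ, Continuous g →
        (∃ C : ℝ, ∀ x, ‖g x‖ ≤ C) →
        ∀ x : EuclideanSpace ℝ (Fin d),
          IntegrableOn (fun t : ℝ => Complex.exp (-(lam * t)) * ouT d α δ S t g x)
            (Set.Ioi 0) ∧
          ‖∫ t in Set.Ioi (0:ℝ), Complex.exp (-(lam * t)) * ouT d α δ S t g x‖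
            ≤ (‖α‖ / α.re) ^ ((d : ℝ) / 2) / (lam.re - (-δ.re)) *
              ⨆ y : EuclideanSpace ℝ (Fin d), ‖g y‖) := by
  have hαne : α ≠ 0 := fun h => by simp [h] at hα
  have habs : 0 < ‖α‖ := norm_pos_iff.mpr hαne
  set M : ℝ := (‖α‖ / α.re) ^ ((d : ℝ) / 2) with hM
  have hM1 : 1 ≤ M := by
    apply Real.one_le_rpow _ (by positivity)
    rw [le_div_iff₀ hα, one_mul]
    exact Complex.re_le_norm α
  have hM0 : 0 < M := lt_of_lt_of_le one_pos hM1
  -- part 1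
  have part1 : ∀ v : EuclideanSpace ℝ (Fin d) → ℂ, Continuous v →
      (∃ C : ℝ, ∀ x, ‖v x‖ ≤ C) →
      ∀ t : ℝ, 0 ≤ t → ∀ x : EuclideanSpace ℝ (Fin d),
        ‖ouT d α δ S t v x‖
          ≤ M * Real.exp (-δ.re * t) * ⨆ y : EuclideanSpace ℝ (Fin d), ‖v y‖ := by
    rintro v hv ⟨C, hC⟩ t ht x
    have hbdd : BddAbove (Set.range fun y : EuclideanSpace ℝ (Fin d) => ‖v y‖) :=
      ⟨C, by rintro _ ⟨y, rfl⟩; exact hC y⟩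
    have hsup : ∀ ξ, ‖v ξ‖ ≤ ⨆ y : EuclideanSpace ℝ (Fin d), ‖v y‖ :=
      fun ξ => le_ciSup hbdd ξ
    have hsup0 : 0 ≤ ⨆ y : EuclideanSpace ℝ (Fin d), ‖v y‖ :=
      le_trans (norm_nonneg _) (hsup x)
    rcases eq_or_lt_of_le ht with h0 | hpos
    · rw [← h0, show (-δ.re * 0 : ℝ) = 0 by ring, Real.exp_zero, mul_one,
        show ouT d α δ S 0 v x = v x from if_pos rfl]
      exact le_trans (hsup x) (le_mul_of_one_le_left hsup0 hM1)
    · exact ouT_bound d α δ hα S v hv hsup hpos x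
  refine ⟨part1, ?_⟩
  rintro lam hlam g hg ⟨C, hC⟩ x
  have hbdd : BddAbove (Set.range fun y : EuclideanSpace ℝ (Fin d) => ‖g y‖) :=
    ⟨C, by rintro _ ⟨y, rfl⟩; exact hC y⟩
  have hsup : ∀ ξ, ‖g ξ‖ ≤ ⨆ y : EuclideanSpace ℝ (Fin d), ‖g y‖ :=
    fun ξ => le_ciSup hbdd ξ
  set K : ℝ := ⨆ y : EuclideanSpace ℝ (Fin d), ‖g y‖ with hKdef
  have hK0 : 0 ≤ K := le_trans (norm_nonneg _) (hsup x)
  set b : ℝ := lam.re + δ.re with hbdef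
  have hb : 0 < b := by simp only [hbdef]; linarith
  set f : ℝ → ℂ := fun t => Complex.exp (-(lam * t)) * ouT d α δ S t g x with hfdef
  -- pointwise bound
  have hbound : ∀ t ∈ Set.Ioi (0:ℝ), ‖f t‖ ≤ M * K * Real.exp (-b * t) := by
    intro t ht
    rw [hfdef]
    simp only [norm_mul, Complex.norm_exp]
    have h1 : (-(lam * (t:ℂ))).re = -(lam.re * t) := by
      simp [Complex.mul_re]
    rw [h1]
    calc Real.exp (-(lam.re * t)) * ‖ouT d α δ S t g x‖
        ≤ Real.exp (-(lam.re * t)) * (M * Real.exp (-δ.re * t) * K) := by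
          exact mul_le_mul_of_nonneg_left
            (ouT_bound d α δ hα S g hg hsup ht x) (Real.exp_nonneg _)
      _ = M * K * Real.exp (-b * t) := by
          rw [show -b * t = -(lam.re * t) + -δ.re * t by rw [hbdef]; ring, Real.exp_add]
          ring
  -- dominating function integrable
  have hφint : IntegrableOn (fun t : ℝ => M * K * Real.exp (-b * t)) (Set.Ioi 0) :=
    (exp_neg_integrableOn_Ioi 0 hb).const_mul _
  -- measurability
  have hcont : ContinuousOn
      (fun p : ℝ × EuclideanSpace ℝ (Fin d) => ouH d α δ S x p.2 p.1 * g p.2)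
      (Set.Ioi (0:ℝ) ×ˢ Set.univ) := by
    have hrot : Continuous fun p : ℝ × EuclideanSpace ℝ (Fin d) =>
        (‖ouRot d S p.1 x - p.2‖ ^ 2 : ℝ) :=
      ((((ouRot_continuous d S x).comp continuous_fst).sub continuous_snd).norm).pow 2
    unfold ouH
    apply ContinuousOn.mul _ (hg.comp continuous_snd).continuousOn
    apply ContinuousOn.mul
    · intro p hp
      have hp1 : (0:ℝ) < p.1 := hp.1
      apply ContinuousAt.continuousWithinAt
      have hbase : Continuous fun p : ℝ × EuclideanSpace ℝ (Fin d) =>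
          (4 * (Real.pi : ℂ) * α * (p.1 : ℂ)) := by fun_prop
      refine (continuousAt_cpow_const ?_).comp hbase.continuousAt
      rw [Complex.mem_slitPlane_iff]
      left
      have : (4 * (Real.pi : ℂ) * α * (p.1 : ℂ)).re = 4 * Real.pi * α.re * p.1 := by
        simp [Complex.mul_re, Complex.mul_im]
      rw [this]
      positivity
    · refine Complex.continuous_exp.comp_continuousOn ?_
      apply ContinuousOn.sub
      · exact (by fun_prop :
          Continuous fun p : ℝ × EuclideanSpace ℝ (Fin d) => -(δ * (p.1:ℂ))).continuousOn
      · apply ContinuousOn.div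
        · exact (Complex.continuous_ofReal.comp hrot).continuousOn
        · exact (by fun_prop :
            Continuous fun p : ℝ × EuclideanSpace ℝ (Fin d) => 4 * α * (p.1:ℂ)).continuousOn
        · intro p hp
          have hp1 : (0:ℝ) < p.1 := hp.1
          apply mul_ne_zero (mul_ne_zero (by norm_num) hαne)
          exact_mod_cast hp1.ne'
  have hmeas : AEStronglyMeasurable
      (fun p : ℝ × EuclideanSpace ℝ (Fin d) => ouH d α δ S x p.2 p.1 * g p.2)
      ((volume.restrict (Set.Ioi 0)).prod volume) := by
    rw [Measure.restrict_prod_eq_prod_univ]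
    exact hcont.aestronglyMeasurable (measurableSet_Ioi.prod MeasurableSet.univ)
  have hTm : AEStronglyMeasurable
      (fun t : ℝ => ∫ ξ : EuclideanSpace ℝ (Fin d), ouH d α δ S x ξ t * g ξ)
      (volume.restrict (Set.Ioi 0)) := hmeas.integral_prod_right'
  have hfm : AEStronglyMeasurable f (volume.restrict (Set.Ioi 0)) := by
    have hae : ∀ᵐ t ∂(volume.restrict (Set.Ioi (0:ℝ))),
        (fun t : ℝ => Complex.exp (-(lam * t)) *
          ∫ ξ : EuclideanSpace ℝ (Fin d), ouH d α δ S x ξ t * g ξ) t = f t := by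
      filter_upwards [ae_restrict_mem measurableSet_Ioi] with t ht
      rw [hfdef]
      simp only [ouT, if_neg (ne_of_gt (show (0:ℝ) < t from ht))]
    exact (((Complex.continuous_exp.comp (by fun_prop)).aestronglyMeasurable).mul hTm).congr hae
  have hInt : IntegrableOn f (Set.Ioi 0) := by
    refine Integrable.mono' hφint hfm ?_
    filter_upwards [ae_restrict_mem measurableSet_Ioi] with t ht
    exact hbound t ht
  refine ⟨hInt, ?_⟩
  have hexp : ∫ t in Set.Ioi (0:ℝ), Real.exp (-b * t) = b⁻¹ := by
    have h := integral_exp_neg_mul_rpow (p := 1) one_pos hb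
    simp only [Real.rpow_one] at h
    rw [h]
    norm_num [Real.Gamma_two, Real.rpow_neg_one]
  calc ‖∫ t in Set.Ioi (0:ℝ), f t‖
      = ‖∫ t in Set.Ioi (0:ℝ), f t‖ := rfl
    _ ≤ ∫ t in Set.Ioi (0:ℝ), ‖f t‖ := norm_integral_le_integral_norm _
    _ ≤ ∫ t in Set.Ioi (0:ℝ), M * K * Real.exp (-b * t) := by
        refine integral_mono_ae hInt.norm hφint ?_
        filter_upwards [ae_restrict_mem measurableSet_Ioi] with t ht
        exact hbound t ht
    _ = M * K * ∫ t in Set.Ioi (0:ℝ), Real.exp (-b * t) := integral_const_mul _ _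
    _ = M / (lam.re - -δ.re) * K := by
        rw [hexp, show lam.re - -δ.re = b by rw [hbdef]; ring]
        field_simp
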